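/- arXiv:1806.05126 — 2 statements merged into one kernel-verified Lean document; each statement's English description precedes it below -/
import Mathlib

section
/- Let M = (S, A, X, T, i) be a parametric MDP with induced POMDP M', and let f denote the bijection from Hist_X to Hist' given by f(x, s0·a0·⋯·sn) = (s0,x)·a0·⋯·(sn,x). Then the assignment Φ(π_X) = π_X ∘ f⁻¹ is a bijective correspondence between the pMDP policies of M and the POMDP policies of M', with inverse Φ⁻¹(π') = π' ∘ f. -/
open MeasureTheory ENNReal

namespace PMDPEncoding

universe u v w

variable {S : Type u} {A : Type v} {X : Type w}

/-- An infinite alternating sequence of state-action pairs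
(the `k`-th pair consists of the `k`-th state and the `k`-th action of the run). -/
abbrev RunSeq (S : Type u) (A : Type v) := ℕ → S × A

/-- `ρ` is a run of the MDP with transition function `T`:
all transitions have positive probability. -/
def IsRun (T : S → A → PMF S) (ρ : RunSeq S A) : Prop :=
  ∀ k, 0 < T (ρ k).1 (ρ k).2 (ρ (k + 1)).1

/-- A history: a finite list of state-action pairs followed by a final state. -/
abbrev Hist (S : Type u) (A : Type v) := List (S × A) × S

/-- The first state of a history. -/
def Hist.first (h : Hist S A) : S :=
  match h.1 with
  | [] => h.2
  | p :: _ => p.1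

/-- Auxiliary for `IsHist`: validity of the list part of a history with final state `t`. -/
def IsHistL (T : S → A → PMF S) : List (S × A) → S → Prop
  | [], _ => True
  | (s, a) :: rest, t => 0 < T s a (Hist.first (rest, t)) ∧ IsHistL T rest t

/-- `h` is a history (finite prefix of a run) of the MDP with transition function `T`. -/
def IsHist (T : S → A → PMF S) (h : Hist S A) : Prop := IsHistL T h.1 h.2

/-- The set of runs of the MDP with transition function `T`. -/
def Runs (T : S → A → PMF S) := {ρ : RunSeq S A // IsRun T ρ}

/-- The set of (raw) sequences having the history `h` as a prefix. -/
def ConeSeq (h : Hist S A) : Set (RunSeq S A) :=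
  {ρ | (∀ k, (hk : k < h.1.length) → ρ k = h.1[k]'hk) ∧ (ρ h.1.length).1 = h.2}

/-- The cone of a history: the set of runs with prefix `h`. -/
def Cone (T : S → A → PMF S) (h : Hist S A) : Set (Runs T) :=
  {ρ | ρ.1 ∈ ConeSeq h}

/-- The σ-algebra on runs generated by the cones of histories. -/
instance conesAlg (T : S → A → PMF S) : MeasurableSpace (Runs T) :=
  MeasurableSpace.generateFrom {C | ∃ h : Hist S A, IsHist T h ∧ C = Cone T h}

/-- Valid histories of an MDP, as a subtype. -/
def HistOf (T : S → A → PMF S) := {h : Hist S A // IsHist T h}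

/-- Auxiliary function for the probability of a cone:
`pre` is the prefix of the history processed so far. -/
noncomputable def coneProbAux (T : S → A → PMF S) (π : Hist S A → PMF A) :
    List (S × A) → List (S × A) → S → ℝ≥0∞
  | _, [], _ => 1
  | pre, (s, a) :: rest, t =>
      π (pre, s) a * T s a (Hist.first (rest, t)) *
        coneProbAux T π (pre ++ [(s, a)]) rest t

/-- The probability `i(s₀) · ∏_{k<n} π(s₀a₀…s_k)(a_k) · T(s_k,a_k)(s_{k+1})` that the
induced measure of policy `π` and initial distribution `i` assigns to the cone of a history. -/
noncomputable def coneProb (T : S → A → PMF S) (i : PMF S) (π : Hist S A → PMF A)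
    (h : Hist S A) : ℝ≥0∞ :=
  i h.first * coneProbAux T π [] h.1 h.2

/-- The evaluated transition function `T_x` of a pMDP at parameter point `x`. -/
def evalT (T : S → A → X → PMF S) (x : X) : S → A → PMF S := fun s a => T s a x

/-- Runs of a pMDP: pairs `(x, ρ)` of a parameter value `x` and a run `ρ` of `M(x)`. -/
def RunsX (T : S → A → X → PMF S) := {q : X × RunSeq S A // IsRun (evalT T q.1) q.2}

/-- Valid histories of a pMDP: pairs `(x, h)` with `h` a history of `M(x)`. -/
def HistX (T : S → A → X → PMF S) := {q : X × Hist S A // IsHist (evalT T q.1) q.2}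

/-- The generator set `{x} × Cone(h)` of the σ-algebra on the runs of a pMDP. -/
def ConeX (T : S → A → X → PMF S) (x : X) (h : Hist S A) : Set (RunsX T) :=
  {q | q.1.1 = x ∧ q.1.2 ∈ ConeSeq h}

/-- The σ-algebra on the runs of a pMDP generated by the sets `{x} × Cone(h)`. -/
instance conesXAlg (T : S → A → X → PMF S) : MeasurableSpace (RunsX T) :=
  MeasurableSpace.generateFrom
    {C | ∃ (x : X) (h : Hist S A), IsHist (evalT T x) h ∧ C = ConeX T x h}

/-- The transition function `T'` of the induced POMDP of a pMDP:
`T'((s,x),a)(s',x') = T(s,a)(x)(s') · δ_x(x')`. -/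
noncomputable def indT (T : S → A → X → PMF S) : S × X → A → PMF (S × X) :=
  fun sx a => (T sx.1 a sx.2).map fun s' => (s', sx.2)

/-- The observation function of the induced POMDP: `O(s,x) = s`. -/
def obs : S × X → S := Prod.fst

/-- The observation map extended to histories of the induced POMDP. -/
def obsHist : Hist (S × X) A → Hist S A :=
  fun h => (h.1.map fun p => (p.1.1, p.2), h.2.1)

/-- The map `f` on raw sequences: `f(x, s₀·a₀·s₁·⋯) = (s₀,x)·a₀·(s₁,x)·⋯`. -/
def fSeq (x : X) (ρ : RunSeq S A) : RunSeq (S × X) A :=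
  fun k => (((ρ k).1, x), (ρ k).2)

theorem indT_pos {T : S → A → X → PMF S} {s s' : S} {a : A} {x : X}
    (h : 0 < T s a x s') : 0 < indT T (s, x) a (s', x) := by
  have hmem : (s', x) ∈ ((T s a x).map fun u => (u, x)).support := by
    rw [PMF.support_map]
    exact ⟨s', (PMF.mem_support_iff _ _).2 h.ne', rfl⟩
  exact pos_iff_ne_zero.mpr ((PMF.mem_support_iff _ _).1 hmem)

/-- The map `f : Runs_X → Runs'` from the runs of a pMDP to the runs of its induced POMDP. -/
def fRun (T : S → A → X → PMF S) (q : RunsX T) : Runs (indT T) :=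
  ⟨fSeq q.1.1 q.1.2, fun k => indT_pos (q.2 k)⟩

/-- The map `f` on raw histories: `f(x, s₀·a₀·⋯·s_n) = (s₀,x)·a₀·⋯·(s_n,x)`. -/
def fHistSeq (x : X) (h : Hist S A) : Hist (S × X) A :=
  (h.1.map fun p => ((p.1, x), p.2), (h.2, x))

theorem isHist_fHistSeq (T : S → A → X → PMF S) (x : X) :
    ∀ (l : List (S × A)) (t : S), IsHist (evalT T x) (l, t) →
      IsHist (indT T) (fHistSeq x (l, t))
  | [], _, _ => trivial
  | (s, a) :: rest, t, hv => by
      obtain ⟨h1, h2⟩ := hv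
      have hrec := isHist_fHistSeq T x rest t h2
      refine ⟨?_, hrec⟩
      show 0 < indT T (s, x) a (Hist.first ((rest.map fun p => ((p.1, x), p.2)), (t, x)))
      have hfirst : Hist.first ((rest.map fun p => ((p.1, x), p.2) : List ((S × X) × A)), (t, x)) =
          (Hist.first (rest, t), x) := by
        cases rest <;> rfl
      rw [hfirst]
      exact indT_pos h1

/-- The map `f : Hist_X → Hist'` from the histories of a pMDP to the histories of
its induced POMDP. -/
def fHistX (T : S → A → X → PMF S) (q : HistX T) : HistOf (indT T) :=
  ⟨fHistSeq q.1.1 q.1.2, isHist_fHistSeq T q.1.1 q.1.2.1 q.1.2.2 q.2⟩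

/-- Some run of an MDP: start anywhere, always pick a fixed action, and follow the
support of the transition distributions. -/
noncomputable def someRunSeq (T : S → A → PMF S) (sa : S × A) (a : A) : RunSeq S A :=
  fun k => Nat.rec sa (fun _ ih => ((PMF.support_nonempty (T ih.1 ih.2)).some, a)) k

theorem someRunSeq_isRun (T : S → A → PMF S) (sa : S × A) (a : A) :
    IsRun T (someRunSeq T sa a) := by
  intro k
  exact pos_iff_ne_zero.mpr <| (PMF.mem_support_iff _ _).1 <|
    (PMF.support_nonempty (T (someRunSeq T sa a k).1 (someRunSeq T sa a k).2)).some_mem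

instance instNonemptyRuns [Nonempty S] [Nonempty A] (T : S → A → PMF S) :
    Nonempty (Runs T) :=
  ⟨⟨someRunSeq T (Classical.arbitrary S, Classical.arbitrary A) (Classical.arbitrary A),
    someRunSeq_isRun _ _ _⟩⟩

instance instNonemptyRunsX [Nonempty S] [Nonempty A] [Nonempty X] (T : S → A → X → PMF S) :
    Nonempty (RunsX T) :=
  ⟨⟨(Classical.arbitrary X,
      someRunSeq (evalT T (Classical.arbitrary X))
        (Classical.arbitrary S, Classical.arbitrary A) (Classical.arbitrary A)),
    someRunSeq_isRun _ _ _⟩⟩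

instance instNonemptyHistX [Nonempty S] [Nonempty X] (T : S → A → X → PMF S) :
    Nonempty (HistX T) :=
  ⟨⟨(Classical.arbitrary X, ([], Classical.arbitrary S)), trivial⟩⟩

instance instNonemptyHistOf [Nonempty S] (T : S → A → PMF S) :
    Nonempty (HistOf T) :=
  ⟨⟨([], Classical.arbitrary S), trivial⟩⟩

instance instNonemptyPMDPPolicy [Nonempty S] [Nonempty A] [Nonempty X]
    (T : S → A → X → PMF S) :
    Nonempty {π : HistX T → PMF A // ∀ q q' : HistX T, q.1.2 = q'.1.2 → π q = π q'} :=
  ⟨⟨fun _ => PMF.pure (Classical.arbitrary A), fun _ _ _ => rfl⟩⟩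

theorem indT_pos_elim {T : S → A → X → PMF S} {s : S} {x : X} {a : A} {p : S × X}
    (h : 0 < indT T (s, x) a p) : 0 < T s a x p.1 ∧ p.2 = x := by
  have hmem := (PMF.mem_support_iff _ _).2 h.ne'
  rw [indT, PMF.support_map] at hmem
  obtain ⟨u, hu, he⟩ := hmem
  subst he
  exact ⟨pos_iff_ne_zero.mpr hu, rfl⟩

theorem obsHist_isHist (T : S → A → X → PMF S) :
    ∀ (l : List ((S × X) × A)) (t : S) (x : X), IsHistL (indT T) l (t, x) →
      IsHistL (evalT T x) (l.map fun p => (p.1.1, p.2)) t ∧ ∀ p ∈ l, p.1.2 = x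
  | [], _, _, _ => ⟨trivial, by simp⟩
  | ((s, xs), a) :: rest, t, x, ⟨h1, h2⟩ => by
      obtain ⟨ih1, ih2⟩ := obsHist_isHist T rest t x h2
      have hfst : Hist.first (rest, (t, x)) =
          ((Hist.first ((rest.map fun p => (p.1.1, p.2)), t)), x) := by
        cases rest with
        | nil => rfl
        | cons q r =>
            have := ih2 q List.mem_cons_self
            simp [Hist.first, ← this]
      rw [hfst] at h1
      obtain ⟨hpos, hx⟩ := indT_pos_elim h1
      subst hx
      refine ⟨⟨hpos, ih1⟩, ?_⟩
      rintro p hp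
      rcases List.mem_cons.mp hp with rfl | hp
      · rfl
      · exact ih2 p hp

/-- The inverse of `fHistX`. -/
def gHistX (T : S → A → X → PMF S) (h : HistOf (indT T)) : HistX T :=
  ⟨(h.1.2.2, obsHist h.1),
    (obsHist_isHist T h.1.1 h.1.2.1 h.1.2.2 h.2).1⟩

theorem fHistX_gHistX (T : S → A → X → PMF S) (h : HistOf (indT T)) :
    fHistX T (gHistX T h) = h := by
  apply Subtype.ext
  have hall := (obsHist_isHist T h.1.1 h.1.2.1 h.1.2.2 h.2).2
  show fHistSeq h.1.2.2 (obsHist h.1) = h.1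
  unfold fHistSeq obsHist
  refine Prod.ext ?_ rfl
  show (h.1.1.map fun p => (p.1.1, p.2)).map (fun p => ((p.1, h.1.2.2), p.2)) = h.1.1
  rw [List.map_map]
  conv_rhs => rw [← List.map_id h.1.1]
  refine List.map_congr_left fun p hp => ?_
  have := hall p hp
  simp [Function.comp, ← this]

theorem comp_proj (x : X) :
    ((fun p : (S × X) × A => (p.1.1, p.2)) ∘ fun p : S × A => ((p.1, x), p.2)) = id :=
  funext fun _ => rfl

theorem gHistX_fHistX (T : S → A → X → PMF S) (q : HistX T) :
    gHistX T (fHistX T q) = q := by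
  apply Subtype.ext
  show (((fHistSeq q.1.1 q.1.2).2.2 : X), obsHist (fHistSeq q.1.1 q.1.2)) = q.1
  unfold fHistSeq obsHist
  simp [List.map_map, comp_proj]

theorem obsHist_fHistSeq (x : X) (h : Hist S A) : obsHist (fHistSeq x h) = h := by
  unfold fHistSeq obsHist
  simp [List.map_map, comp_proj]

/-- The assignment `Φ(π_X) = π_X ∘ f⁻¹` is a bijective correspondence
between the pMDP policies of `M` and the POMDP policies of its induced POMDP `M'`,
with inverse `Φ⁻¹(π') = π' ∘ f`. -/
theorem policy_bijective_correspondence [Nonempty S] [Nonempty A] [Nonempty X]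
    (T : S → A → X → PMF S) :
    ∃ Φ : {π : HistX T → PMF A // ∀ q q' : HistX T, q.1.2 = q'.1.2 → π q = π q'} →
        {π' : HistOf (indT T) → PMF A //
          ∀ h1 h2 : HistOf (indT T), obsHist h1.1 = obsHist h2.1 → π' h1 = π' h2},
      (∀ π h', (Φ π).1 h' = π.1 (Function.invFun (fHistX T) h')) ∧
      Function.Bijective Φ ∧
      (∀ π' q, (Function.invFun Φ π').1 q = π'.1 (fHistX T q)) := by
  classical
  let P := {π : HistX T → PMF A // ∀ q q' : HistX T, q.1.2 = q'.1.2 → π q = π q'}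
  let Q := {π' : HistOf (indT T) → PMF A //
      ∀ h1 h2 : HistOf (indT T), obsHist h1.1 = obsHist h2.1 → π' h1 = π' h2}
  let Φ : P → Q := fun π => ⟨fun h' => π.1 (gHistX T h'), fun h1 h2 hobs => π.2 _ _ hobs⟩
  let Ψ : Q → P := fun π' => ⟨fun q => π'.1 (fHistX T q), fun q q' hq => π'.2 _ _ (by
      show obsHist (fHistSeq q.1.1 q.1.2) = obsHist (fHistSeq q'.1.1 q'.1.2)
      rw [obsHist_fHistSeq, obsHist_fHistSeq, hq])⟩
  have hleft : ∀ π, Ψ (Φ π) = π := by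
    intro π
    apply Subtype.ext
    funext q
    show π.1 (gHistX T (fHistX T q)) = π.1 q
    rw [gHistX_fHistX]
  have hright : ∀ π', Φ (Ψ π') = π' := by
    intro π'
    apply Subtype.ext
    funext h'
    show π'.1 (fHistX T (gHistX T h')) = π'.1 h'
    rw [fHistX_gHistX]
  have hinj : Function.Injective Φ := fun π₁ π₂ h => by
    rw [← hleft π₁, h, hleft π₂]
  refine ⟨Φ, ?_, ⟨hinj, fun π' => ⟨Ψ π', hright π'⟩⟩, ?_⟩
  · intro π h'
    show π.1 (gHistX T h') = π.1 (Function.invFun (fHistX T) h')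
    have hsurj : fHistX T (Function.invFun (fHistX T) h') = h' :=
      Function.invFun_eq ⟨gHistX T h', fHistX_gHistX T h'⟩
    have : gHistX T h' = Function.invFun (fHistX T) h' := by
      conv_lhs => rw [← hsurj]
      exact gHistX_fHistX T _
    rw [this]
  · intro π' q
    have heq : Function.invFun Φ π' = Ψ π' := by
      apply hinj
      rw [Function.invFun_eq ⟨Ψ π', hright π'⟩, hright π']
    rw [heq]

end PMDPEncoding
end

section
/- Let M = (S, A, X, T, i) be a parametric MDP with induced POMDP M', let p ∈ Dist(X) be a parameter distribution, let π_X be a pMDP policy of M, let π' = Φ(π_X) = π_X ∘ f⁻¹, and let i' ∈ Dist(S×X) be given by i'(s,x) = i(s)·p(x). Then P^M_{π_X,i,p} = P^{M'}_{π',i'} ∘ f, i.e., the pushforward of the measure P^M_{π_X,i,p} along the measurable isomorphism f : (Runs_X, Cones_X) → (Runs', Cones') equals the measure P^{M'}_{π',i'}. -/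
open MeasureTheory ENNReal

namespace PMDPEncoding

universe u v w

variable {S : Type u} {A : Type v} {X : Type w}

lemma indT_apply (T : S → A → X → PMF S) (s s' : S) (a : A) (x : X) :
    indT T (s, x) a (s', x) = T s a x s' := by
  rw [indT, PMF.map_apply, tsum_eq_single s']
  · simp
  · intro b hb
    simp only [Prod.mk.injEq, ite_eq_right_iff, and_imp]
    intro h _; exact absurd h.symm hb

lemma indT_snd_eq {T : S → A → X → PMF S} {s : S} {a : A} {x : X} {sx' : S × X}
    (h : 0 < indT T (s, x) a sx') : sx'.2 = x := by
  have : sx' ∈ ((T s a x).map fun u => (u, x)).support :=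
    (PMF.mem_support_iff _ _).2 h.ne'
  rw [PMF.support_map] at this
  obtain ⟨u, _, hu⟩ := this
  rw [← hu]

lemma first_map (x : X) (l : List (S × A)) (t : S) :
    Hist.first ((l.map fun p => ((p.1, x), p.2) : List ((S × X) × A)), (t, x)) =
      (Hist.first (l, t), x) := by
  cases l <;> rfl

lemma isHistL_prefix (T : S → A → PMF S) :
    ∀ (pre l : List (S × A)) (t : S), IsHistL T (pre ++ l) t →
      IsHistL T pre (Hist.first (l, t))
  | [], _, _, _ => trivial
  | (s, a) :: pre', l, t, ⟨h1, h2⟩ => by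
    refine ⟨?_, isHistL_prefix T pre' l t h2⟩
    have heq : Hist.first (pre' ++ l, t) = Hist.first (pre', Hist.first (l, t)) := by
      cases pre' <;> cases l <;> rfl
    rw [List.append_eq, heq] at h1
    exact h1

lemma hist_indT_decomp_aux (T : S → A → X → PMF S) :
    ∀ (l' : List ((S × X) × A)) (t' : S × X), IsHist (indT T) (l', t') →
      fHistSeq t'.2 ((l'.map fun p => (p.1.1, p.2)), t'.1) = (l', t') ∧
        IsHist (evalT T t'.2) ((l'.map fun p => (p.1.1, p.2)), t'.1)
  | [], t', _ => by
    constructor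
    · simp [fHistSeq]
    · trivial
  | ((s, x), a) :: rest, t', hv => by
    obtain ⟨h1, h2⟩ := hv
    obtain ⟨ih1, ih2⟩ := hist_indT_decomp_aux T rest t' h2
    have hfirst : Hist.first (rest, t') =
        (Hist.first ((rest.map fun p => (p.1.1, p.2)), t'.1), t'.2) := by
      conv_lhs => rw [← ih1]
      rw [fHistSeq, first_map]
    have hx : x = t'.2 := by
      have := indT_snd_eq h1
      rw [hfirst] at this
      exact this.symm
    subst hx
    constructor
    · simp only [fHistSeq, List.map_cons]
      rw [show ((rest.map fun p => (p.1.1, p.2)).map fun p => ((p.1, t'.2), p.2)) = rest from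
          congrArg Prod.fst ih1,
        show ((t'.1, t'.2) : S × X) = t' from congrArg Prod.snd ih1]
    · refine ⟨?_, ih2⟩
      rw [hfirst, indT_apply] at h1
      exact h1

lemma hist_indT_decomp (T : S → A → X → PMF S) (h' : Hist (S × X) A)
    (hv : IsHist (indT T) h') :
    ∃ (x : X) (h : Hist S A), IsHist (evalT T x) h ∧ h' = fHistSeq x h := by
  obtain ⟨e, hvh⟩ := hist_indT_decomp_aux T h'.1 h'.2 hv
  exact ⟨h'.2.2, _, hvh, e.symm⟩

lemma fRun_preimage (T : S → A → X → PMF S) (x : X) (h : Hist S A) :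
    fRun T ⁻¹' Cone (indT T) (fHistSeq x h) = ConeX T x h := by
  ext q
  obtain ⟨⟨x', ρ⟩, hq⟩ := q
  simp only [Set.mem_preimage, Cone, ConeX, ConeSeq, fRun, fHistSeq, fSeq,
    Set.mem_setOf_eq, List.length_map]
  constructor
  · rintro ⟨hpre, hlast⟩
    have hx : x' = x := (Prod.ext_iff.1 hlast).2
    subst hx
    refine ⟨rfl, fun k hk => ?_, (Prod.ext_iff.1 hlast).1⟩
    have hthis := hpre k hk
    rw [List.getElem_map] at hthis
    obtain ⟨h1, h2⟩ := Prod.ext_iff.1 hthis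
    exact Prod.ext (Prod.ext_iff.1 h1).1 h2
  · rintro ⟨hx, hpre, hlast⟩
    subst hx
    refine ⟨fun k hk => ?_, Prod.ext hlast rfl⟩
    rw [List.getElem_map, ← hpre k hk]; rfl

lemma measurable_fRun (T : S → A → X → PMF S) : Measurable (fRun T) := by
  apply measurable_generateFrom
  rintro C ⟨h', hv', rfl⟩
  obtain ⟨x, h, hvh, rfl⟩ := hist_indT_decomp T h' hv'
  rw [fRun_preimage]
  exact MeasurableSpace.measurableSet_generateFrom ⟨x, h, hvh, rfl⟩

lemma coneSeq_subset {h1 h2 : Hist S A} (hle : h1.1.length ≤ h2.1.length)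
    (hne : (ConeSeq h1 ∩ ConeSeq h2).Nonempty) : ConeSeq h2 ⊆ ConeSeq h1 := by
  obtain ⟨ρ0, ⟨hp1, hs1⟩, ⟨hp2, hs2⟩⟩ := hne
  rintro ρ ⟨hp, hs⟩
  constructor
  · intro k hk
    rw [hp k (lt_of_lt_of_le hk hle), ← hp2 k (lt_of_lt_of_le hk hle), hp1 k hk]
  · rcases lt_or_eq_of_le hle with hlt | heq
    · rw [hp _ hlt, ← hp2 _ hlt, hs1]
    · rw [heq, hs, ← hs2, ← heq, hs1]

lemma cone_piSystem (T : S → A → PMF S) :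
    IsPiSystem {C : Set (Runs T) | ∃ h : Hist S A, IsHist T h ∧ C = Cone T h} := by
  rintro _ ⟨h1, hv1, rfl⟩ _ ⟨h2, hv2, rfl⟩ hne
  obtain ⟨ρ0, h01, h02⟩ := hne
  rcases le_total h1.1.length h2.1.length with hle | hle
  · have hsub := coneSeq_subset hle ⟨ρ0.1, h01, h02⟩
    have heq : Cone T h1 ∩ Cone T h2 = Cone T h2 :=
      Set.ext fun ρ => ⟨fun hx => hx.2, fun hx => ⟨hsub hx, hx⟩⟩
    rw [heq]; exact ⟨h2, hv2, rfl⟩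
  · have hsub := coneSeq_subset hle ⟨ρ0.1, h02, h01⟩
    have heq : Cone T h1 ∩ Cone T h2 = Cone T h1 :=
      Set.ext fun ρ => ⟨fun hx => hx.1, fun hx => ⟨hx, hsub hx⟩⟩
    rw [heq]; exact ⟨h1, hv1, rfl⟩

lemma coneProbAux_corr (T : S → A → X → PMF S) (x : X)
    (πX : X × Hist S A → PMF A) (π' : Hist (S × X) A → PMF A)
    (hPhi : ∀ (x : X) (h : Hist S A), IsHist (evalT T x) h → π' (fHistSeq x h) = πX (x, h)) :
    ∀ (l pre : List (S × A)) (t : S), IsHistL (evalT T x) (pre ++ l) t →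
      coneProbAux (indT T) π' (pre.map fun p => ((p.1, x), p.2))
          (l.map fun p => ((p.1, x), p.2)) (t, x)
        = coneProbAux (evalT T x) (fun h => πX (x, h)) pre l t
  | [], _, _, _ => rfl
  | (s, a) :: rest, pre, t, H => by
    have hpre : IsHist (evalT T x) (pre, s) :=
      isHistL_prefix (evalT T x) pre ((s, a) :: rest) t H
    have hrec := coneProbAux_corr T x πX π' hPhi rest (pre ++ [(s, a)]) t
      (by rw [List.append_assoc, List.singleton_append]; exact H)
    simp only [List.map_cons]
    show π' ((pre.map fun p => ((p.1, x), p.2)), (s, x)) a *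
        indT T (s, x) a (Hist.first ((rest.map fun p => ((p.1, x), p.2)), (t, x))) *
        coneProbAux (indT T) π'
          ((pre.map fun p => ((p.1, x), p.2)) ++ [((s, x), a)])
          (rest.map fun p => ((p.1, x), p.2)) (t, x)
      = πX (x, (pre, s)) a * evalT T x s a (Hist.first (rest, t)) *
        coneProbAux (evalT T x) (fun h => πX (x, h)) (pre ++ [(s, a)]) rest t
    rw [first_map, indT_apply]
    have hπ : π' ((pre.map fun p => ((p.1, x), p.2)), (s, x)) = πX (x, (pre, s)) :=
      hPhi x (pre, s) hpre
    rw [hπ]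
    congr 1
    rw [← hrec, List.map_append]
    rfl

lemma coneProb_corr (T : S → A → X → PMF S) (i : PMF S) (p : PMF X) (x : X)
    (πX : X × Hist S A → PMF A) (π' : Hist (S × X) A → PMF A)
    (hPhi : ∀ (x : X) (h : Hist S A), IsHist (evalT T x) h → π' (fHistSeq x h) = πX (x, h))
    (i' : PMF (S × X)) (hi' : ∀ s x, i' (s, x) = i s * p x)
    (h : Hist S A) (hv : IsHist (evalT T x) h) :
    coneProb (indT T) i' π' (fHistSeq x h) =
      p x * coneProb (evalT T x) i (fun h => πX (x, h)) h := by
  obtain ⟨l, t⟩ := h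
  have hfirst : (fHistSeq x (l, t)).first = (Hist.first (l, t), x) := by
    cases l <;> rfl
  rw [coneProb, coneProb, hfirst, hi']
  have haux := coneProbAux_corr T x πX π' hPhi l [] t hv
  simp only [List.map_nil] at haux
  show i (Hist.first (l, t)) * p x *
      coneProbAux (indT T) π' [] (l.map fun p => ((p.1, x), p.2)) (t, x) = _
  rw [haux]
  ring

/-- Let `p ∈ Dist(X)` be a parameter distribution, `π_X` a pMDP policy of
`M`, `π' = Φ(π_X) = π_X ∘ f⁻¹`, and `i'(s,x) = i(s)·p(x)`. Then
`P^M_{π_X,i,p} = P^{M'}_{π',i'} ∘ f`: the pushforward of `P^M_{π_X,i,p}` along the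
measurable isomorphism `f : (Runs_X, Cones_X) → (Runs', Cones')` equals `P^{M'}_{π',i'}`. -/
theorem measure_pushforward_correspondence (T : S → A → X → PMF S) (i : PMF S) (p : PMF X)
    (πX : X × Hist S A → PMF A)
    (hind : ∀ (x y : X) (h : Hist S A), IsHist (evalT T x) h → IsHist (evalT T y) h →
      πX (x, h) = πX (y, h))
    (π' : Hist (S × X) A → PMF A)
    (hPhi : ∀ (x : X) (h : Hist S A), IsHist (evalT T x) h → π' (fHistSeq x h) = πX (x, h))
    (i' : PMF (S × X)) (hi' : ∀ s x, i' (s, x) = i s * p x)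
    (Px : ∀ x : X, Measure (Runs (evalT T x)))
    (hPxProb : ∀ x, IsProbabilityMeasure (Px x))
    (hPx : ∀ (x : X) (h : Hist S A), IsHist (evalT T x) h →
      Px x (Cone (evalT T x) h) = coneProb (evalT T x) i (fun h => πX (x, h)) h)
    (μ : Measure (RunsX T)) [IsProbabilityMeasure μ]
    (hμ : ∀ (x : X) (h : Hist S A), IsHist (evalT T x) h →
      μ (ConeX T x h) = p x * Px x (Cone (evalT T x) h))
    (P' : Measure (Runs (indT T))) [IsProbabilityMeasure P']
    (hP' : ∀ h' : Hist (S × X) A, IsHist (indT T) h' →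
      P' (Cone (indT T) h') = coneProb (indT T) i' π' h') :
    μ.map (fRun T) = P' := by
  have hmeas : Measurable (fRun T) := measurable_fRun T
  have hprob : IsProbabilityMeasure (μ.map (fRun T)) :=
    Measure.isProbabilityMeasure_map hmeas.aemeasurable
  refine ext_of_generate_finite _ rfl (cone_piSystem (indT T)) ?_ ?_
  · rintro C ⟨h', hv', rfl⟩
    obtain ⟨x, h, hvh, hfeq⟩ := hist_indT_decomp T h' hv'
    subst hfeq
    have hCmeas : MeasurableSet (Cone (indT T) (fHistSeq x h)) :=
      MeasurableSpace.measurableSet_generateFrom ⟨fHistSeq x h, hv', rfl⟩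
    rw [Measure.map_apply hmeas hCmeas, fRun_preimage, hμ x h hvh, hPx x h hvh,
      hP' _ hv', coneProb_corr T i p x πX π' hPhi i' hi' h hvh]
  · simp

end PMDPEncoding
end
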